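/- Let B ≥ 1 be a real number and let 𝒬_B = { n ∈ ℕ : n = a²b³ for some positive integers a, b with b ≤ B and b squarefree }. Then for any real numbers X, H with 4 ≤ H ≤ X and any positive integer n with n² ≤ X + H, the number of elements f ∈ 𝒬_B with n² ≤ f < (n+1)² and f ≤ X + H is O(B), with an absolute implied constant. -/
import Mathlib


/-- The set of positive integers of the form `a² b³` with `b` squarefree and `b ≤ B`. -/
def QB (B : ℝ) : Set ℕ :=
  {n : ℕ | ∃ a b : ℕ, 0 < a ∧ 0 < b ∧ Squarefree b ∧ (b : ℝ) ≤ B ∧ n = a^2 * b^3}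

lemma qb_aux {n a₁ a₂ b : ℕ} (hb : 0 < b)
    (h1 : n^2 ≤ a₁^2 * b^3) (h2 : a₂^2 * b^3 < (n+1)^2)
    (hlt : a₁^2 * b^3 < a₂^2 * b^3) : False := by
  have hb1 : 1 ≤ b^3 := Nat.one_le_iff_ne_zero.mpr (pow_ne_zero 3 hb.ne')
  have ha : a₁ < a₂ := by
    by_contra h
    push_neg at h
    exact absurd hlt (not_lt.mpr (Nat.mul_le_mul_right _ (Nat.pow_le_pow_left h 2)))
  have hnb : n ≤ a₁ * b^3 := by
    have hsq : n^2 ≤ (a₁ * b^3)^2 := by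
      calc n^2 ≤ a₁^2 * b^3 := h1
        _ ≤ a₁^2 * b^3 * b^3 := Nat.le_mul_of_pos_right _ (pow_pos hb 3)
        _ = (a₁ * b^3)^2 := by ring
    exact (Nat.pow_le_pow_iff_left (by norm_num)).mp hsq
  have key : (a₁+1)^2 * b^3 ≤ a₂^2 * b^3 :=
    Nat.mul_le_mul_right _ (Nat.pow_le_pow_left ha 2)
  nlinarith [h1, h2, hnb, hb1, key]

theorem count_QB_between_squares :
    ∃ C : ℝ, 0 < C ∧ ∀ B : ℝ, 1 ≤ B → ∀ X H : ℝ, 4 ≤ H → H ≤ X →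
      ∀ n : ℕ, 0 < n → (n : ℝ)^2 ≤ X + H →
      ({f : ℕ | n^2 ≤ f ∧ f < (n+1)^2 ∧ (f : ℝ) ≤ X + H ∧ f ∈ QB B}.ncard : ℝ)
        ≤ C * B := by
  classical
  refine ⟨1, one_pos, ?_⟩
  intro B hB X H hH hHX n hn hnX
  set S := {f : ℕ | n^2 ≤ f ∧ f < (n+1)^2 ∧ (f : ℝ) ≤ X + H ∧ f ∈ QB B} with hS
  have key : ∀ f ∈ S, ∃ a b : ℕ, 0 < a ∧ 0 < b ∧ Squarefree b ∧ (b : ℝ) ≤ B ∧ f = a^2 * b^3 :=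
    fun f hf => hf.2.2.2
  choose! a b ha hb hsf hbB hfab using key
  have hmaps : ∀ f ∈ S, b f ∈ Set.Icc 1 ⌊B⌋₊ := by
    intro f hf
    exact ⟨hb f hf, Nat.le_floor (hbB f hf)⟩
  have hinj : Set.InjOn b S := by
    intro f₁ h₁ f₂ h₂ hbe
    rcases lt_trichotomy f₁ f₂ with h | h | h
    · refine absurd h (not_lt.mpr ?_).elim
      exfalso
      have e1 := hfab f₁ h₁
      have e2 := hfab f₂ h₂
      rw [hbe] at e1
      exact qb_aux (hb f₂ h₂) (e1 ▸ h₁.1) (e2 ▸ h₂.2.1) (by rw [← e1, ← e2]; exact h)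
    · exact h
    · exfalso
      have e1 := hfab f₁ h₁
      have e2 := hfab f₂ h₂
      rw [hbe] at e1
      exact qb_aux (hb f₂ h₂) (e2 ▸ h₂.1) (e1 ▸ h₁.2.1) (by rw [← e1, ← e2]; exact h)
  have hcard : S.ncard ≤ (Set.Icc 1 ⌊B⌋₊).ncard :=
    Set.ncard_le_ncard_of_injOn b hmaps hinj (Set.finite_Icc 1 ⌊B⌋₊)
  have hIcc : (Set.Icc 1 ⌊B⌋₊).ncard = ⌊B⌋₊ := by
    rw [← Finset.coe_Icc, Set.ncard_coe_finset, Nat.card_Icc]; omega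
  rw [hIcc] at hcard
  have : (S.ncard : ℝ) ≤ (⌊B⌋₊ : ℝ) := by exact_mod_cast hcard
  have hfl : (⌊B⌋₊ : ℝ) ≤ B := Nat.floor_le (by linarith)
  linarith
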